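/- Let H be a 4-dimensional real vector space, Q a 2-dimensional real vector space, and L : H × H → Q an alternating ℝ-bilinear map such that the Λ⁴H*-valued symmetric bilinear form (ψ, φ) ↦ (ψ∘L) ∧ (φ∘L) on Q* is nondegenerate and such that (ψ₀∘L) ∧ (ψ₀∘L) = 0 for some nonzero ψ₀ ∈ Q*. Then there exist 2-dimensional subspaces H₊ and H₋ of H with H = H₊ ⊕ H₋, with L(x,y) = 0 for all x ∈ H₊ and y ∈ H₋, and such that Q₊ = span{L(x,y) : x,y ∈ H₊} and Q₋ = span{L(x,y) : x,y ∈ H₋} are one-dimensional with Q = Q₊ ⊕ Q₋; moreover the unordered pair {H₊, H₋} with these properties is unique. -/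

import Mathlib

/-- The wedge product of two alternating bilinear forms on a real vector space,
evaluated on four vectors via the (2,2)-shuffle formula. -/
def wedge22 {V : Type*} (ω η : V → V → ℝ) (x y z w : V) : ℝ :=
  ω x y * η z w - ω x z * η y w + ω x w * η y z
    + ω y z * η x w - ω y w * η x z + ω z w * η x y

/-- The subspace of `Q` spanned by the values of `L` on a subspace `H'` of `H`. -/
def valuesSpan {H Q : Type*} [AddCommGroup H] [Module ℝ H]
    [AddCommGroup Q] [Module ℝ Q] (L : H →ₗ[ℝ] H →ₗ[ℝ] Q)
    (H' : Submodule ℝ H) : Submodule ℝ Q :=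
  Submodule.span ℝ {q : Q | ∃ x ∈ H', ∃ y ∈ H', L x y = q}

/-- The defining properties of the canonical splitting in the hyperbolic case:
`H = H₊ ⊕ H₋` into 2-dimensional subspaces with `L(H₊, H₋) = 0`, and the spans
`Q± = span L(H±, H±)` are one-dimensional with `Q = Q₊ ⊕ Q₋`. -/
def IsHyperbolicSplitting {H Q : Type*} [AddCommGroup H] [Module ℝ H]
    [AddCommGroup Q] [Module ℝ Q] (L : H →ₗ[ℝ] H →ₗ[ℝ] Q)
    (Hp Hm : Submodule ℝ H) : Prop :=
  Module.finrank ℝ Hp = 2 ∧ Module.finrank ℝ Hm = 2 ∧ IsCompl Hp Hm ∧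
    (∀ x ∈ Hp, ∀ y ∈ Hm, L x y = 0) ∧
    Module.finrank ℝ (valuesSpan L Hp) = 1 ∧
    Module.finrank ℝ (valuesSpan L Hm) = 1 ∧
    IsCompl (valuesSpan L Hp) (valuesSpan L Hm)

section Aux
variable {V : Type*}

lemma w22_01 (ω η : V → V → ℝ) (hω : ∀ a, ω a a = 0) (hη : ∀ a, η a a = 0)
    (x z w : V) : wedge22 ω η x x z w = 0 := by
  simp only [wedge22]
  linear_combination (η z w) * hω x + (ω z w) * hη x

lemma w22_02 (ω η : V → V → ℝ) (hω : ∀ a, ω a a = 0) (hη : ∀ a, η a a = 0)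
    (hωs : ∀ a b, ω a b = - ω b a) (hηs : ∀ a b, η a b = - η b a)
    (x y w : V) : wedge22 ω η x y x w = 0 := by
  simp only [wedge22]
  linear_combination (η x w) * hωs x y + (ω x w) * hηs y x
    + (- η y w) * hω x + (- ω y w) * hη x

lemma w22_03 (ω η : V → V → ℝ) (hω : ∀ a, ω a a = 0) (hη : ∀ a, η a a = 0)
    (hωs : ∀ a b, ω a b = - ω b a) (hηs : ∀ a b, η a b = - η b a)
    (x y z : V) : wedge22 ω η x y z x = 0 := by
  simp only [wedge22]
  linear_combination (- η x z) * hωs y x + (ω x y) * hηs z x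
    + (- ω x z) * hηs y x + (η x y) * hωs z x + (η y z) * hω x + (ω y z) * hη x

lemma w22_12 (ω η : V → V → ℝ) (hω : ∀ a, ω a a = 0) (hη : ∀ a, η a a = 0)
    (x y w : V) : wedge22 ω η x y y w = 0 := by
  simp only [wedge22]
  linear_combination (ω x w) * hη y + (η x w) * hω y

lemma w22_13 (ω η : V → V → ℝ) (hω : ∀ a, ω a a = 0) (hη : ∀ a, η a a = 0)
    (hωs : ∀ a b, ω a b = - ω b a) (hηs : ∀ a b, η a b = - η b a)
    (x y z : V) : wedge22 ω η x y z y = 0 := by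
  simp only [wedge22]
  linear_combination (ω x y) * hηs z y + (η x y) * hωs y z
    + (- ω x z) * hη y + (- η x z) * hω y

lemma w22_23 (ω η : V → V → ℝ) (hω : ∀ a, ω a a = 0) (hη : ∀ a, η a a = 0)
    (x y z : V) : wedge22 ω η x y z z = 0 := by
  simp only [wedge22]
  linear_combination (ω x y) * hη z + (η x y) * hω z

end Aux

section B
variable {H Q : Type*} [AddCommGroup H] [Module ℝ H]
  [AddCommGroup Q] [Module ℝ Q] (L : H →ₗ[ℝ] H →ₗ[ℝ] Q)

lemma Lskew (halt : ∀ x : H, L x x = 0) (a b : H) : L a b = - L b a := by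
  have h := halt (a + b)
  simp only [map_add, LinearMap.add_apply, halt, zero_add, add_zero] at h
  exact eq_neg_of_add_eq_zero_right h

lemma omega_skew (halt : ∀ x : H, L x x = 0) (ψ : Module.Dual ℝ Q) (a b : H) :
    ψ (L a b) = - ψ (L b a) := by rw [Lskew L halt a b, map_neg]

lemma omega_diag (halt : ∀ x : H, L x x = 0) (ψ : Module.Dual ℝ Q) (a : H) :
    ψ (L a a) = 0 := by rw [halt]; simp

def Wfun (ψ φ : Module.Dual ℝ Q) (v : Fin 4 → H) : ℝ :=
  wedge22 (fun a b => ψ (L a b)) (fun a b => φ (L a b)) (v 0) (v 1) (v 2) (v 3)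

noncomputable def Wmap (halt : ∀ x : H, L x x = 0) (ψ φ : Module.Dual ℝ Q) :
    H [⋀^Fin 4]→ₗ[ℝ] ℝ where
  toFun := Wfun L ψ φ
  map_update_add' := by
    intro dec v i x y
    have hdec : dec = instDecidableEqFin 4 := Subsingleton.elim _ _
    subst hdec
    fin_cases i <;>
      simp [Wfun, wedge22, Function.update_apply,
        map_add, LinearMap.add_apply] <;> ring
  map_update_smul' := by
    intro dec v i c x
    have hdec : dec = instDecidableEqFin 4 := Subsingleton.elim _ _
    subst hdec
    fin_cases i <;>
      simp [Wfun, wedge22, Function.update_apply,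
        map_smul, LinearMap.smul_apply, smul_eq_mul] <;> ring
  map_eq_zero_of_eq' := by
    intro v i j hv hij
    have hω := omega_diag L halt ψ
    have hη := omega_diag L halt φ
    have hωs := omega_skew L halt ψ
    have hηs := omega_skew L halt φ
    fin_cases i <;> fin_cases j
    · exact absurd rfl hij
    · show wedge22 (fun a b => ψ (L a b)) (fun a b => φ (L a b)) (v 0) (v 1) (v 2) (v 3) = 0
      rw [show v 0 = v 1 from hv]; exact w22_01 _ _ hω hη _ _ _
    · show wedge22 (fun a b => ψ (L a b)) (fun a b => φ (L a b)) (v 0) (v 1) (v 2) (v 3) = 0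
      rw [show v 0 = v 2 from hv]; exact w22_02 _ _ hω hη hωs hηs _ _ _
    · show wedge22 (fun a b => ψ (L a b)) (fun a b => φ (L a b)) (v 0) (v 1) (v 2) (v 3) = 0
      rw [show v 0 = v 3 from hv]; exact w22_03 _ _ hω hη hωs hηs _ _ _
    · show wedge22 (fun a b => ψ (L a b)) (fun a b => φ (L a b)) (v 0) (v 1) (v 2) (v 3) = 0
      rw [show v 1 = v 0 from hv]; exact w22_01 _ _ hω hη _ _ _
    · exact absurd rfl hij
    · show wedge22 (fun a b => ψ (L a b)) (fun a b => φ (L a b)) (v 0) (v 1) (v 2) (v 3) = 0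
      rw [show v 1 = v 2 from hv]; exact w22_12 _ _ hω hη _ _ _
    · show wedge22 (fun a b => ψ (L a b)) (fun a b => φ (L a b)) (v 0) (v 1) (v 2) (v 3) = 0
      rw [show v 1 = v 3 from hv]; exact w22_13 _ _ hω hη hωs hηs _ _ _
    · show wedge22 (fun a b => ψ (L a b)) (fun a b => φ (L a b)) (v 0) (v 1) (v 2) (v 3) = 0
      rw [show v 2 = v 0 from hv]; exact w22_02 _ _ hω hη hωs hηs _ _ _
    · show wedge22 (fun a b => ψ (L a b)) (fun a b => φ (L a b)) (v 0) (v 1) (v 2) (v 3) = 0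
      rw [show v 2 = v 1 from hv]; exact w22_12 _ _ hω hη _ _ _
    · exact absurd rfl hij
    · show wedge22 (fun a b => ψ (L a b)) (fun a b => φ (L a b)) (v 0) (v 1) (v 2) (v 3) = 0
      rw [show v 2 = v 3 from hv]; exact w22_23 _ _ hω hη _ _ _
    · show wedge22 (fun a b => ψ (L a b)) (fun a b => φ (L a b)) (v 0) (v 1) (v 2) (v 3) = 0
      rw [show v 3 = v 0 from hv]; exact w22_03 _ _ hω hη hωs hηs _ _ _
    · show wedge22 (fun a b => ψ (L a b)) (fun a b => φ (L a b)) (v 0) (v 1) (v 2) (v 3) = 0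
      rw [show v 3 = v 1 from hv]; exact w22_13 _ _ hω hη hωs hηs _ _ _
    · show wedge22 (fun a b => ψ (L a b)) (fun a b => φ (L a b)) (v 0) (v 1) (v 2) (v 3) = 0
      rw [show v 3 = v 2 from hv]; exact w22_23 _ _ hω hη _ _ _
    · exact absurd rfl hij

end B

section C
variable {H Q : Type*} [AddCommGroup H] [Module ℝ H]
  [AddCommGroup Q] [Module ℝ Q] (L : H →ₗ[ℝ] H →ₗ[ℝ] Q) (e : Module.Basis (Fin 4) ℝ H)

noncomputable def Bf (ψ φ : Module.Dual ℝ Q) : ℝ := Wfun L ψ φ ⇑e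

lemma Wfun_rep (halt : ∀ x : H, L x x = 0) (ψ φ : Module.Dual ℝ Q) (v : Fin 4 → H) :
    Wfun L ψ φ v = Bf L e ψ φ * e.det v := by
  have h := (Wmap L halt ψ φ).eq_smul_basis_det e
  have h2 : Wmap L halt ψ φ v = (Wmap L halt ψ φ ⇑e • e.det) v := by rw [← h]
  simp only [AlternatingMap.smul_apply, smul_eq_mul] at h2
  exact h2

lemma det_update (x : H) (i : Fin 4) :
    e.det (Function.update (⇑e) i x) = e.repr x i := by
  rw [Module.Basis.det_apply, Module.Basis.toMatrix_update, Module.Basis.toMatrix_self,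
    ← Matrix.cramer_apply, Matrix.cramer_one]
  rfl

lemma Wfun_update_eq_zero (ψ φ : Module.Dual ℝ Q) (x : H)
    (hx : ∀ y, L x y = 0) (hx' : ∀ y, L y x = 0) (i : Fin 4) (v : Fin 4 → H) :
    Wfun L ψ φ (Function.update v i x) = 0 := by
  fin_cases i <;> simp [Wfun, wedge22, Function.update_apply, hx, hx']

lemma key_identity (halt : ∀ x : H, L x x = 0) (ψ : Module.Dual ℝ Q)
    (hnull : ∀ x y z w : H,
      wedge22 (fun a b => ψ (L a b)) (fun a b => ψ (L a b)) x y z w = 0)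
    {a b : H} (hab : ψ (L a b) = 1) (x y : H) :
    ψ (L x y) = ψ (L x a) * ψ (L y b) - ψ (L x b) * ψ (L y a) := by
  have h := hnull x y a b
  simp only [wedge22] at h
  linear_combination h / 2 - ψ (L x y) * hab

lemma mem_ker_pmap (halt : ∀ x : H, L x x = 0) (ψ : Module.Dual ℝ Q)
    (hnull : ∀ x y z w : H,
      wedge22 (fun a b => ψ (L a b)) (fun a b => ψ (L a b)) x y z w = 0)
    {a b : H} (hab : ψ (L a b) = 1) (x : H) :
    x - ψ (L x b) • a + ψ (L x a) • b ∈ LinearMap.ker (L.compr₂ ψ) := by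
  rw [LinearMap.mem_ker]
  apply LinearMap.ext
  intro y
  have hs := omega_skew L halt ψ
  have hk := key_identity L halt ψ hnull hab x y
  simp only [LinearMap.compr₂_apply, map_sub, map_add, map_smul,
    LinearMap.sub_apply, LinearMap.add_apply, LinearMap.smul_apply,
    smul_eq_mul, LinearMap.zero_apply]
  linear_combination hk - ψ (L x b) * hs a y + ψ (L x a) * hs b y

lemma ker_isCompl (halt : ∀ x : H, L x x = 0) (ψ : Module.Dual ℝ Q)
    (hnull : ∀ x y z w : H,
      wedge22 (fun a b => ψ (L a b)) (fun a b => ψ (L a b)) x y z w = 0)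
    {a b : H} (hab : ψ (L a b) = 1) :
    IsCompl (Submodule.span ℝ {a, b}) (LinearMap.ker (L.compr₂ ψ)) := by
  have hs := omega_skew L halt ψ
  have hd := omega_diag L halt ψ
  constructor
  · rw [Submodule.disjoint_def]
    intro z hzs hzk
    obtain ⟨s, t, hz⟩ := Submodule.mem_span_pair.mp hzs
    rw [LinearMap.mem_ker] at hzk
    have h1 : ψ (L z b) = 0 := by
      have := LinearMap.congr_fun hzk b
      simpa [LinearMap.compr₂_apply] using this
    have h2 : ψ (L z a) = 0 := by
      have := LinearMap.congr_fun hzk a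
      simpa [LinearMap.compr₂_apply] using this
    rw [← hz] at h1 h2
    simp only [map_add, map_smul, LinearMap.add_apply, LinearMap.smul_apply,
      smul_eq_mul] at h1 h2
    rw [hab, hd b] at h1
    rw [hd a] at h2
    have hba : ψ (L b a) = -1 := by rw [hs b a, hab]
    rw [hba] at h2
    have hs0 : s = 0 := by linarith [h1]
    have ht0 : t = 0 := by linarith [h2]
    rw [← hz, hs0, ht0]
    simp
  · rw [codisjoint_iff, Submodule.eq_top_iff']
    intro x
    have hx : x = (ψ (L x b) • a - ψ (L x a) • b)
        + (x - ψ (L x b) • a + ψ (L x a) • b) := by module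
    rw [hx]
    refine Submodule.add_mem_sup ?_ (mem_ker_pmap L halt ψ hnull hab x)
    exact sub_mem
      (Submodule.smul_mem _ _ (Submodule.subset_span (by simp)))
      (Submodule.smul_mem _ _ (Submodule.subset_span (by simp)))

lemma span_pair_finrank (halt : ∀ x : H, L x x = 0) (ψ : Module.Dual ℝ Q)
    {a b : H} (hab : ψ (L a b) = 1) :
    Module.finrank ℝ (Submodule.span ℝ ({a, b} : Set H)) = 2 := by
  have hs := omega_skew L halt ψ
  have hd := omega_diag L halt ψ
  have hli : LinearIndependent ℝ ![a, b] := by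
    rw [LinearIndependent.pair_iff]
    intro s t hst
    have h1 : ψ (L (s • a + t • b) b) = 0 := by rw [hst]; simp
    have h2 : ψ (L (s • a + t • b) a) = 0 := by rw [hst]; simp
    simp only [map_add, map_smul, LinearMap.add_apply, LinearMap.smul_apply,
      smul_eq_mul] at h1 h2
    rw [hab, hd b] at h1
    have hba : ψ (L b a) = -1 := by rw [hs b a, hab]
    rw [hd a, hba] at h2
    constructor <;> linarith
  have h2 := finrank_span_eq_card hli
  have hr : Set.range ![a, b] = {a, b} := by
    ext z; simp [Fin.exists_fin_two, or_comm]
  rw [hr] at h2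
  rw [h2]
  simp
end C

section D
variable {H Q : Type*} [AddCommGroup H] [Module ℝ H]
  [AddCommGroup Q] [Module ℝ Q] (L : H →ₗ[ℝ] H →ₗ[ℝ] Q) (e : Module.Basis (Fin 4) ℝ H)

lemma Bf_symm (ψ φ : Module.Dual ℝ Q) : Bf L e ψ φ = Bf L e φ ψ := by
  simp only [Bf, Wfun, wedge22]; ring

lemma Bf_right_comb (ψ α β : Module.Dual ℝ Q) (s t : ℝ) :
    Bf L e ψ (s • α + t • β) = s * Bf L e ψ α + t * Bf L e ψ β := by
  simp only [Bf, Wfun, wedge22, LinearMap.add_apply, LinearMap.smul_apply,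
    smul_eq_mul]
  ring

lemma Bf_left_comb (ψ α β : Module.Dual ℝ Q) (s t : ℝ) :
    Bf L e (s • α + t • β) ψ = s * Bf L e α ψ + t * Bf L e β ψ := by
  simp only [Bf, Wfun, wedge22, LinearMap.add_apply, LinearMap.smul_apply,
    smul_eq_mul]
  ring

lemma Bf_zero_right (ψ : Module.Dual ℝ Q) : Bf L e ψ 0 = 0 := by
  simp [Bf, Wfun, wedge22]

lemma Bf_eq_zero_of_omega_zero_left (ψ φ : Module.Dual ℝ Q)
    (h : ∀ x y, ψ (L x y) = 0) : Bf L e ψ φ = 0 := by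
  simp [Bf, Wfun, wedge22, h]

lemma Bf_eq_zero_of_omega_zero_right (ψ φ : Module.Dual ℝ Q)
    (h : ∀ x y, φ (L x y) = 0) : Bf L e ψ φ = 0 := by
  simp [Bf, Wfun, wedge22, h]

lemma Bf_of_pointwise (ψ φ : Module.Dual ℝ Q)
    (h : ∀ x y z w : H,
      wedge22 (fun a b => ψ (L a b)) (fun a b => φ (L a b)) x y z w = 0) :
    Bf L e ψ φ = 0 :=
  h (e 0) (e 1) (e 2) (e 3)

lemma pointwise_of_Bf (halt : ∀ x : H, L x x = 0) (ψ φ : Module.Dual ℝ Q)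
    (h : Bf L e ψ φ = 0) (x y z w : H) :
    wedge22 (fun a b => ψ (L a b)) (fun a b => φ (L a b)) x y z w = 0 := by
  have h1 := Wfun_rep L e halt ψ φ ![x, y, z, w]
  have h2 : Wfun L ψ φ ![x, y, z, w]
      = wedge22 (fun a b => ψ (L a b)) (fun a b => φ (L a b)) x y z w := by
    simp [Wfun]
  rw [h2, h, zero_mul] at h1
  exact h1

lemma Bf_eq_zero_of_ann (halt : ∀ x : H, L x x = 0) (ψ φ : Module.Dual ℝ Q)
    {x : H} (hx0 : x ≠ 0) (hx : ∀ y, L x y = 0) : Bf L e ψ φ = 0 := by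
  have hx' : ∀ y, L y x = 0 := by
    intro y; rw [Lskew L halt y x, hx y, neg_zero]
  have hrep : ∃ i, e.repr x i ≠ 0 := by
    by_contra hc
    push_neg at hc
    exact hx0 ((Module.Basis.forall_coord_eq_zero_iff e).mp (fun i => by
      simpa [Module.Basis.coord_apply] using hc i))
  obtain ⟨i, hi⟩ := hrep
  have h1 := Wfun_rep L e halt ψ φ (Function.update (⇑e) i x)
  rw [Wfun_update_eq_zero L ψ φ x hx hx' i ⇑e, det_update] at h1
  rcases mul_eq_zero.mp h1.symm with h | h
  · exact h
  · exact absurd h hi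

lemma dual_pair_zero [FiniteDimensional ℝ Q] (hQ : Module.finrank ℝ Q = 2)
    (ψ₀ ψ₁ : Module.Dual ℝ Q) (hli : LinearIndependent ℝ ![ψ₀, ψ₁])
    {q : Q} (h0 : ψ₀ q = 0) (h1 : ψ₁ q = 0) : q = 0 := by
  have hcard : Fintype.card (Fin 2) = Module.finrank ℝ (Module.Dual ℝ Q) := by
    rw [Subspace.dual_finrank_eq, hQ, Fintype.card_fin]
  let D : Module.Basis (Fin 2) ℝ (Module.Dual ℝ Q) :=
    basisOfLinearIndependentOfCardEqFinrank hli hcard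
  have hD : ⇑D = ![ψ₀, ψ₁] := coe_basisOfLinearIndependentOfCardEqFinrank _ _
  rw [← Module.forall_dual_apply_eq_zero_iff ℝ q]
  intro ψ
  have h := D.sum_repr ψ
  rw [← h]
  simp [hD, Fin.sum_univ_two, LinearMap.coe_sum, Finset.sum_apply,
    LinearMap.add_apply, LinearMap.smul_apply, h0, h1]
end D

section E
variable {H Q : Type*} [AddCommGroup H] [Module ℝ H]
  [AddCommGroup Q] [Module ℝ Q] (L : H →ₗ[ℝ] H →ₗ[ℝ] Q)

lemma mem_kerW_iff (ψ : Module.Dual ℝ Q) (x : H) :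
    x ∈ LinearMap.ker (L.compr₂ ψ) ↔ ∀ y, ψ (L x y) = 0 := by
  rw [LinearMap.mem_ker, LinearMap.ext_iff]
  simp [LinearMap.compr₂_apply]

lemma exists_one (ψ : Module.Dual ℝ Q) (h : ¬ ∀ x y : H, ψ (L x y) = 0) :
    ∃ a b : H, ψ (L a b) = 1 := by
  push_neg at h
  obtain ⟨a, b, hab⟩ := h
  refine ⟨(ψ (L a b))⁻¹ • a, b, ?_⟩
  simp only [map_smul, LinearMap.smul_apply, smul_eq_mul]
  field_simp

lemma ker_finrank_two [FiniteDimensional ℝ H] (hH : Module.finrank ℝ H = 4)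
    (halt : ∀ x : H, L x x = 0) (ψ : Module.Dual ℝ Q)
    (hnull : ∀ x y z w : H,
      wedge22 (fun a b => ψ (L a b)) (fun a b => ψ (L a b)) x y z w = 0)
    {a b : H} (hab : ψ (L a b) = 1) :
    Module.finrank ℝ (LinearMap.ker (L.compr₂ ψ)) = 2 := by
  have hc := Submodule.finrank_add_eq_of_isCompl (ker_isCompl L halt ψ hnull hab)
  rw [span_pair_finrank L halt ψ hab, hH] at hc
  omega

lemma exists_comb [FiniteDimensional ℝ Q] (hQ : Module.finrank ℝ Q = 2)
    (ψ₀ ψ₁ : Module.Dual ℝ Q) (hli : LinearIndependent ℝ ![ψ₀, ψ₁])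
    (ψ : Module.Dual ℝ Q) : ∃ c₀ c₁ : ℝ, ψ = c₀ • ψ₀ + c₁ • ψ₁ := by
  have hcard : Fintype.card (Fin 2) = Module.finrank ℝ (Module.Dual ℝ Q) := by
    rw [Subspace.dual_finrank_eq, hQ, Fintype.card_fin]
  let D : Module.Basis (Fin 2) ℝ (Module.Dual ℝ Q) :=
    basisOfLinearIndependentOfCardEqFinrank hli hcard
  have hD : ⇑D = ![ψ₀, ψ₁] := coe_basisOfLinearIndependentOfCardEqFinrank _ _
  refine ⟨D.repr ψ 0, D.repr ψ 1, ?_⟩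
  have h := D.sum_repr ψ
  rw [Fin.sum_univ_two] at h
  have h0 : D 0 = ψ₀ := by rw [congrFun hD 0]; rfl
  have h1 : D 1 = ψ₁ := by rw [congrFun hD 1]; rfl
  rw [h0, h1] at h
  exact h.symm

lemma pair_indep (e : Module.Basis (Fin 4) ℝ H) (ψ₀ ψ₁ : Module.Dual ℝ Q)
    (hψ₀ne : ψ₀ ≠ 0) (h00 : Bf L e ψ₀ ψ₀ = 0) (h01 : Bf L e ψ₀ ψ₁ ≠ 0) :
    LinearIndependent ℝ ![ψ₀, ψ₁] := by
  rw [LinearIndependent.pair_iff]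
  intro s t hst
  have h := Bf_right_comb L e ψ₀ ψ₀ ψ₁ s t
  rw [hst, Bf_zero_right, h00] at h
  have ht : t = 0 := by
    rcases mul_eq_zero.mp (by linarith : t * Bf L e ψ₀ ψ₁ = 0) with h' | h'
    · exact h'
    · exact absurd h' h01
  refine ⟨?_, ht⟩
  rw [ht, zero_smul, add_zero] at hst
  rcases smul_eq_zero.mp hst with h' | h'
  · exact h'
  · exact absurd h' hψ₀ne

lemma ker_compr₂_smul (ψ : Module.Dual ℝ Q) {c : ℝ} (hc : c ≠ 0) :
    LinearMap.ker (L.compr₂ (c • ψ)) = LinearMap.ker (L.compr₂ ψ) := by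
  ext x
  rw [mem_kerW_iff, mem_kerW_iff]
  constructor <;> intro h y
  · have := h y
    simp only [LinearMap.smul_apply, smul_eq_mul] at this
    rcases mul_eq_zero.mp this with h' | h'
    · exact absurd h' hc
    · exact h'
  · simp [LinearMap.smul_apply, h y]
end E

section F
variable {H Q : Type*} [AddCommGroup H] [Module ℝ H] [FiniteDimensional ℝ H]
  [AddCommGroup Q] [Module ℝ Q] [FiniteDimensional ℝ Q]
  (L : H →ₗ[ℝ] H →ₗ[ℝ] Q)

lemma splitting_of_null_pair (hH : Module.finrank ℝ H = 4)
    (hQ : Module.finrank ℝ Q = 2)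
    (halt : ∀ x : H, L x x = 0) (e : Module.Basis (Fin 4) ℝ H) (ψ₀ ψ₁ : Module.Dual ℝ Q)
    (h00 : Bf L e ψ₀ ψ₀ = 0) (h11 : Bf L e ψ₁ ψ₁ = 0) (h01 : Bf L e ψ₀ ψ₁ ≠ 0) :
    IsHyperbolicSplitting L (LinearMap.ker (L.compr₂ ψ₁))
      (LinearMap.ker (L.compr₂ ψ₀)) := by
  set Hp := LinearMap.ker (L.compr₂ ψ₁) with hHp
  set Hm := LinearMap.ker (L.compr₂ ψ₀) with hHm
  have hψ₀ne : ψ₀ ≠ 0 := by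
    rintro rfl; exact h01 (Bf_eq_zero_of_omega_zero_left L e _ _ (by simp))
  have hψ₁ne : ψ₁ ≠ 0 := by
    rintro rfl; exact h01 (Bf_eq_zero_of_omega_zero_right L e _ _ (by simp))
  have hli := pair_indep L e ψ₀ ψ₁ hψ₀ne h00 h01
  have hnull0 := pointwise_of_Bf L e halt ψ₀ ψ₀ h00
  have hnull1 := pointwise_of_Bf L e halt ψ₁ ψ₁ h11
  have hω0 : ¬ ∀ x y : H, ψ₀ (L x y) = 0 := fun hc =>
    h01 (Bf_eq_zero_of_omega_zero_left L e _ _ hc)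
  have hω1 : ¬ ∀ x y : H, ψ₁ (L x y) = 0 := fun hc =>
    h01 (Bf_eq_zero_of_omega_zero_right L e _ _ hc)
  obtain ⟨a0, b0, hab0⟩ := exists_one L ψ₀ hω0
  obtain ⟨a1, b1, hab1⟩ := exists_one L ψ₁ hω1
  have f1 : Module.finrank ℝ Hp = 2 := ker_finrank_two L hH halt ψ₁ hnull1 hab1
  have f0 : Module.finrank ℝ Hm = 2 := ker_finrank_two L hH halt ψ₀ hnull0 hab0
  have hLzero : ∀ x ∈ Hp, ∀ y ∈ Hm, L x y = 0 := by
    intro x hx y hy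
    refine dual_pair_zero hQ ψ₀ ψ₁ hli ?_ ?_
    · rw [omega_skew L halt ψ₀ x y, (mem_kerW_iff L ψ₀ y).mp hy x, neg_zero]
    · exact (mem_kerW_iff L ψ₁ x).mp hx y
  have hdisj : Disjoint Hp Hm := by
    rw [Submodule.disjoint_def]
    intro x hx1 hx0
    by_contra hx
    refine h01 (Bf_eq_zero_of_ann L e halt ψ₀ ψ₁ hx ?_)
    intro y
    exact dual_pair_zero hQ ψ₀ ψ₁ hli ((mem_kerW_iff L ψ₀ x).mp hx0 y)
      ((mem_kerW_iff L ψ₁ x).mp hx1 y)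
  have hcompl : IsCompl Hp Hm := by
    refine ⟨hdisj, codisjoint_iff.mpr ?_⟩
    apply Submodule.eq_top_of_finrank_eq
    have hsi := Submodule.finrank_sup_add_finrank_inf_eq Hp Hm
    rw [hdisj.eq_bot, finrank_bot, f1, f0] at hsi
    rw [hH]
    omega
  have hexp : ∃ x ∈ Hp, ∃ y ∈ Hp, ψ₀ (L x y) ≠ 0 := by
    by_contra hc
    push_neg at hc
    refine h01 (Bf_eq_zero_of_omega_zero_left L e _ _ ?_)
    intro u v
    obtain ⟨up, um, hu, -⟩ := Submodule.existsUnique_add_of_isCompl hcompl u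
    obtain ⟨vp, vm, hv, -⟩ := Submodule.existsUnique_add_of_isCompl hcompl v
    have hum : ∀ z, ψ₀ (L (um : H) z) = 0 := (mem_kerW_iff L ψ₀ um).mp um.2
    have hvm : ψ₀ (L (up : H) (vm : H)) = 0 := by
      rw [omega_skew L halt ψ₀, (mem_kerW_iff L ψ₀ (vm : H)).mp vm.2, neg_zero]
    rw [← hu, ← hv]
    simp only [map_add, LinearMap.add_apply]
    rw [hc up up.2 vp vp.2, hvm, hum, hum]
    ring
  have hexm : ∃ x ∈ Hm, ∃ y ∈ Hm, ψ₁ (L x y) ≠ 0 := by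
    by_contra hc
    push_neg at hc
    refine h01 (Bf_eq_zero_of_omega_zero_right L e _ _ ?_)
    intro u v
    obtain ⟨up, um, hu, -⟩ := Submodule.existsUnique_add_of_isCompl hcompl u
    obtain ⟨vp, vm, hv, -⟩ := Submodule.existsUnique_add_of_isCompl hcompl v
    have hup : ∀ z, ψ₁ (L (up : H) z) = 0 := (mem_kerW_iff L ψ₁ (up : H)).mp up.2
    have hvp : ψ₁ (L (um : H) (vp : H)) = 0 := by
      rw [omega_skew L halt ψ₁, (mem_kerW_iff L ψ₁ (vp : H)).mp vp.2, neg_zero]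
    rw [← hu, ← hv]
    simp only [map_add, LinearMap.add_apply]
    rw [hc um um.2 vm vm.2, hvp, hup, hup]
    ring
  obtain ⟨x0, hx0, y0, hy0, hv0⟩ := hexp
  obtain ⟨x1, hx1, y1, hy1, hv1⟩ := hexm
  have hQple : valuesSpan L Hp ≤ LinearMap.ker ψ₁ := by
    rw [valuesSpan, Submodule.span_le]
    rintro q ⟨x, hx, y, hy, rfl⟩
    exact LinearMap.mem_ker.mpr ((mem_kerW_iff L ψ₁ x).mp hx y)
  have hQmle : valuesSpan L Hm ≤ LinearMap.ker ψ₀ := by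
    rw [valuesSpan, Submodule.span_le]
    rintro q ⟨x, hx, y, hy, rfl⟩
    exact LinearMap.mem_ker.mpr ((mem_kerW_iff L ψ₀ x).mp hx y)
  have hker1 : Module.finrank ℝ (LinearMap.ker ψ₁) ≤ 1 := by
    by_contra hgt
    push_neg at hgt
    have hle := Submodule.finrank_le (LinearMap.ker ψ₁)
    rw [hQ] at hle
    have h2 : Module.finrank ℝ (LinearMap.ker ψ₁) = 2 := by omega
    have : LinearMap.ker ψ₁ = ⊤ := Submodule.eq_top_of_finrank_eq (by rw [h2, hQ])
    exact hψ₁ne (LinearMap.ker_eq_top.mp this)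
  have hker0 : Module.finrank ℝ (LinearMap.ker ψ₀) ≤ 1 := by
    by_contra hgt
    push_neg at hgt
    have hle := Submodule.finrank_le (LinearMap.ker ψ₀)
    rw [hQ] at hle
    have h2 : Module.finrank ℝ (LinearMap.ker ψ₀) = 2 := by omega
    have : LinearMap.ker ψ₀ = ⊤ := Submodule.eq_top_of_finrank_eq (by rw [h2, hQ])
    exact hψ₀ne (LinearMap.ker_eq_top.mp this)
  have rQp : Module.finrank ℝ (valuesSpan L Hp) = 1 := by
    have hle : Module.finrank ℝ (valuesSpan L Hp)
        ≤ Module.finrank ℝ (LinearMap.ker ψ₁) := Submodule.finrank_mono hQple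
    have hmem : L x0 y0 ∈ valuesSpan L Hp :=
      Submodule.subset_span ⟨x0, hx0, y0, hy0, rfl⟩
    have hne0 : Module.finrank ℝ (valuesSpan L Hp) ≠ 0 := by
      intro h0
      rw [Submodule.finrank_eq_zero] at h0
      rw [h0, Submodule.mem_bot] at hmem
      rw [hmem] at hv0
      simp at hv0
    omega
  have rQm : Module.finrank ℝ (valuesSpan L Hm) = 1 := by
    have hle : Module.finrank ℝ (valuesSpan L Hm)
        ≤ Module.finrank ℝ (LinearMap.ker ψ₀) := Submodule.finrank_mono hQmle
    have hmem : L x1 y1 ∈ valuesSpan L Hm :=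
      Submodule.subset_span ⟨x1, hx1, y1, hy1, rfl⟩
    have hne0 : Module.finrank ℝ (valuesSpan L Hm) ≠ 0 := by
      intro h0
      rw [Submodule.finrank_eq_zero] at h0
      rw [h0, Submodule.mem_bot] at hmem
      rw [hmem] at hv1
      simp at hv1
    omega
  have hdisjQ : Disjoint (valuesSpan L Hp) (valuesSpan L Hm) := by
    rw [Submodule.disjoint_def]
    intro q hqp hqm
    exact dual_pair_zero hQ ψ₀ ψ₁ hli
      (LinearMap.mem_ker.mp (hQmle hqm)) (LinearMap.mem_ker.mp (hQple hqp))
  have hcomplQ : IsCompl (valuesSpan L Hp) (valuesSpan L Hm) := by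
    refine ⟨hdisjQ, codisjoint_iff.mpr ?_⟩
    apply Submodule.eq_top_of_finrank_eq
    have hsi := Submodule.finrank_sup_add_finrank_inf_eq
      (valuesSpan L Hp) (valuesSpan L Hm)
    rw [hdisjQ.eq_bot, finrank_bot, rQp, rQm] at hsi
    rw [hQ]
    omega
  exact ⟨f1, f0, hcompl, hLzero, rQp, rQm, hcomplQ⟩
end F

section G
variable {H Q : Type*} [AddCommGroup H] [Module ℝ H] [FiniteDimensional ℝ H]
  [AddCommGroup Q] [Module ℝ Q] [FiniteDimensional ℝ Q]
  (L : H →ₗ[ℝ] H →ₗ[ℝ] Q)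

lemma ker_eq_of_splitting (hH : Module.finrank ℝ H = 4)
    (hQ : Module.finrank ℝ Q = 2)
    (halt : ∀ x : H, L x x = 0) (e : Module.Basis (Fin 4) ℝ H) (ψ₀ ψ₁ : Module.Dual ℝ Q)
    (h00 : Bf L e ψ₀ ψ₀ = 0) (h11 : Bf L e ψ₁ ψ₁ = 0) (h01 : Bf L e ψ₀ ψ₁ ≠ 0)
    (A B : Submodule ℝ H) (hs : IsHyperbolicSplitting L A B) :
    B = LinearMap.ker (L.compr₂ ψ₁) ∨ B = LinearMap.ker (L.compr₂ ψ₀) := by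
  obtain ⟨hA2, hB2, hAB, hz, hQA, hQB, hQc⟩ := hs
  have hψ₀ne : ψ₀ ≠ 0 := by
    rintro rfl; exact h01 (Bf_eq_zero_of_omega_zero_left L e _ _ (by simp))
  have hψ₁ne : ψ₁ ≠ 0 := by
    rintro rfl; exact h01 (Bf_eq_zero_of_omega_zero_right L e _ _ (by simp))
  have hli := pair_indep L e ψ₀ ψ₁ hψ₀ne h00 h01
  -- a functional annihilating the values on B
  have hlt : valuesSpan L B < ⊤ := by
    refine lt_of_le_of_ne le_top ?_
    intro htop
    rw [htop, finrank_top, hQ] at hQB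
    omega
  obtain ⟨ψ', hψ'ne, hmap⟩ := Submodule.exists_dual_map_eq_bot_of_lt_top hlt inferInstance
  have hkill : ∀ q ∈ valuesSpan L B, ψ' q = 0 := by
    intro q hq
    have hm : ψ' q ∈ (valuesSpan L B).map ψ' := Submodule.mem_map_of_mem hq
    rw [hmap] at hm
    exact (Submodule.mem_bot ℝ).mp hm
  have hzB : ∀ x ∈ B, ∀ y, ψ' (L x y) = 0 := by
    intro x hx y
    obtain ⟨yp, ym, hy, -⟩ := Submodule.existsUnique_add_of_isCompl hAB y
    have h1 : L x (yp : H) = 0 := by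
      rw [Lskew L halt, hz _ yp.2 x hx, neg_zero]
    have h2 : ψ' (L x (ym : H)) = 0 :=
      hkill _ (Submodule.subset_span ⟨x, hx, (ym : H), ym.2, rfl⟩)
    rw [← hy, map_add, map_add, h1, h2]
    simp
  -- the quadratic form of ψ' vanishes identically
  let bp := Module.finBasisOfFinrankEq ℝ (↥A) hA2
  set u : H := (bp 0 : H) with hu_def
  set v : H := (bp 1 : H) with hv_def
  set pr := A.linearProjOfIsCompl B hAB with hpr_def
  set F : H → ℝ := fun x => bp.repr (pr x) 0 with hF_def
  set G : H → ℝ := fun x => bp.repr (pr x) 1 with hG_def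
  have hprx : ∀ x : H, ((pr x : H) = F x • u + G x • v) := by
    intro x
    have h := bp.sum_repr (pr x)
    rw [Fin.sum_univ_two] at h
    calc (pr x : H)
        = ((bp.repr (pr x) 0 • bp 0 + bp.repr (pr x) 1 • bp 1 : A) : H) := by
          rw [h]
      _ = F x • u + G x • v := by
          push_cast
          rfl
  have hd : ∀ x : H, x - (pr x : H) ∈ B := by
    intro x
    have h := Submodule.projection_add_projection_eq_self hAB x
    have h2 : x - (pr x : H) = ((B.linearProjOfIsCompl A hAB.symm x : H)) := by
      rw [sub_eq_iff_eq_add]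
      exact (h.symm.trans (add_comm _ _))
    rw [h2]
    exact (B.linearProjOfIsCompl A hAB.symm x).2
  have hsd := omega_diag L halt ψ'
  have hss := omega_skew L halt ψ'
  have hform : ∀ x y : H, ψ' (L x y) = (F x * G y - F y * G x) * ψ' (L u v) := by
    intro x y
    have expand : L x y = L (pr x : H) (pr y : H)
        + L (pr x : H) (y - (pr y : H)) + L (x - (pr x : H)) y := by
      simp only [map_sub, LinearMap.sub_apply]
      abel
    have e1 : ψ' (L x y) = ψ' (L (pr x : H) (pr y : H)) := by
      rw [expand, map_add, map_add, hz _ (pr x).2 _ (hd y), hzB _ (hd x) y]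
      simp
    rw [e1, hprx x, hprx y]
    simp only [map_add, map_smul, LinearMap.add_apply, LinearMap.smul_apply,
      smul_eq_mul]
    linear_combination (F x * F y) * hsd u + (G x * G y) * hsd v
      + (G x * F y) * hss v u
  have hnull' : ∀ x y z w : H,
      wedge22 (fun a b => ψ' (L a b)) (fun a b => ψ' (L a b)) x y z w = 0 := by
    intro x y z w
    simp only [wedge22]
    rw [hform x y, hform z w, hform x z, hform y w, hform x w, hform y z]
    ring
  -- ψ' is not identically zero on values of L
  have hω' : ¬ ∀ x y : H, ψ' (L x y) = 0 := by
    intro hc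
    apply hψ'ne
    apply LinearMap.ext
    intro q
    have hq : q ∈ valuesSpan L A ⊔ valuesSpan L B := by
      rw [hQc.sup_eq_top]; trivial
    obtain ⟨qa, hqa, qb, hqb, hqs⟩ := Submodule.mem_sup.mp hq
    have ha : ψ' qa = 0 := by
      have hle : valuesSpan L A ≤ LinearMap.ker ψ' := by
        rw [valuesSpan, Submodule.span_le]
        rintro w ⟨x, hx, y, hy, rfl⟩
        exact LinearMap.mem_ker.mpr (hc x y)
      exact LinearMap.mem_ker.mp (hle hqa)
    have hb : ψ' qb = 0 := hkill _ hqb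
    rw [← hqs, map_add, ha, hb]
    simp
  obtain ⟨a, b, hab⟩ := exists_one L ψ' hω'
  have hkr2 : Module.finrank ℝ (LinearMap.ker (L.compr₂ ψ')) = 2 :=
    ker_finrank_two L hH halt ψ' hnull' hab
  have hBle : B ≤ LinearMap.ker (L.compr₂ ψ') := fun x hx =>
    (mem_kerW_iff L ψ' x).mpr (hzB x hx)
  have hBeq : B = LinearMap.ker (L.compr₂ ψ') :=
    Submodule.eq_of_le_of_finrank_eq hBle (by rw [hB2, hkr2])
  -- decompose ψ' in the null basis
  obtain ⟨c₀, c₁, hcomb⟩ := exists_comb hQ ψ₀ ψ₁ hli ψ'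
  have hBf' : Bf L e ψ' ψ' = 0 := Bf_of_pointwise L e ψ' ψ' hnull'
  have hexpand : Bf L e ψ' ψ' = 2 * (c₀ * c₁) * Bf L e ψ₀ ψ₁ := by
    rw [hcomb, Bf_left_comb, Bf_right_comb, Bf_right_comb, h00, h11,
      Bf_symm L e ψ₁ ψ₀]
    ring
  have hcc : c₀ * c₁ = 0 := by
    rw [hexpand] at hBf'
    rcases mul_eq_zero.mp hBf' with h | h
    · rcases mul_eq_zero.mp h with h' | h'
      · norm_num at h'
      · exact h'
    · exact absurd h h01
  rcases mul_eq_zero.mp hcc with h | h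
  · -- c₀ = 0 : ψ' proportional to ψ₁
    have hψeq : ψ' = c₁ • ψ₁ := by rw [hcomb, h]; simp
    have hc₁ : c₁ ≠ 0 := by
      intro h1
      apply hψ'ne
      rw [hψeq, h1, zero_smul]
    left
    rw [hBeq, hψeq, ker_compr₂_smul L ψ₁ hc₁]
  · -- c₁ = 0 : ψ' proportional to ψ₀
    have hψeq : ψ' = c₀ • ψ₀ := by rw [hcomb, h]; simp
    have hc₀ : c₀ ≠ 0 := by
      intro h0
      apply hψ'ne
      rw [hψeq, h0, zero_smul]
    right
    rw [hBeq, hψeq, ker_compr₂_smul L ψ₀ hc₀]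

lemma IsHyperbolicSplitting.symm2 (halt : ∀ x : H, L x x = 0)
    {A B : Submodule ℝ H} (hs : IsHyperbolicSplitting L A B) :
    IsHyperbolicSplitting L B A := by
  obtain ⟨hA2, hB2, hAB, hz, hQA, hQB, hQc⟩ := hs
  exact ⟨hB2, hA2, hAB.symm, fun x hx y hy => by
    rw [Lskew L halt, hz y hy x hx, neg_zero], hQB, hQA, hQc.symm⟩
end G


/-- **Pointwise core of Theorem 2 (hyperbolic case).** Let `L : H × H → Q` be an
alternating bilinear map, `dim H = 4`, `dim Q = 2`, such that the `Λ⁴H*`-valued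
symmetric bilinear form `(ψ,φ) ↦ (ψ∘L) ∧ (φ∘L)` on `Q*` is nondegenerate and
isotropic (hyperbolicity). Then there is a splitting `H = H₊ ⊕ H₋` into
2-dimensional subspaces with `L(H₊,H₋) = 0` whose value spans give a splitting
`Q = Q₊ ⊕ Q₋` into lines, and the unordered pair `{H₊, H₋}` is unique. -/
theorem stmt5 (H Q : Type*) [AddCommGroup H] [Module ℝ H] [FiniteDimensional ℝ H]
    [AddCommGroup Q] [Module ℝ Q] [FiniteDimensional ℝ Q]
    (hH : Module.finrank ℝ H = 4) (hQ : Module.finrank ℝ Q = 2)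
    (L : H →ₗ[ℝ] H →ₗ[ℝ] Q) (halt : ∀ x : H, L x x = 0)
    (hnd : ∀ ψ : Module.Dual ℝ Q, ψ ≠ 0 → ∃ φ : Module.Dual ℝ Q,
      ∃ x y z w : H,
        wedge22 (fun a b => ψ (L a b)) (fun a b => φ (L a b)) x y z w ≠ 0)
    (hiso : ∃ ψ₀ : Module.Dual ℝ Q, ψ₀ ≠ 0 ∧ ∀ x y z w : H,
        wedge22 (fun a b => ψ₀ (L a b)) (fun a b => ψ₀ (L a b)) x y z w = 0) :
    ∃ Hp Hm : Submodule ℝ H, IsHyperbolicSplitting L Hp Hm ∧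
      ∀ Hp' Hm' : Submodule ℝ H, IsHyperbolicSplitting L Hp' Hm' →
        (Hp' = Hp ∧ Hm' = Hm) ∨ (Hp' = Hm ∧ Hm' = Hp) := by

  obtain ⟨ψ₀, hψ₀ne, hiso0⟩ := hiso
  let e : Module.Basis (Fin 4) ℝ H := Module.finBasisOfFinrankEq ℝ H hH
  have h00 : Bf L e ψ₀ ψ₀ = 0 := Bf_of_pointwise L e ψ₀ ψ₀ hiso0
  obtain ⟨φ, x, y, z, w, hw⟩ := hnd ψ₀ hψ₀ne
  have hB0φ : Bf L e ψ₀ φ ≠ 0 := by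
    intro h
    exact hw (pointwise_of_Bf L e halt ψ₀ φ h x y z w)
  set t : ℝ := - Bf L e φ φ / (2 * Bf L e ψ₀ φ) with ht
  set ψ₁ : Module.Dual ℝ Q := (1 : ℝ) • φ + t • ψ₀ with hψ₁
  have h01 : Bf L e ψ₀ ψ₁ ≠ 0 := by
    rw [hψ₁, Bf_right_comb, h00]
    simpa using hB0φ
  have h11 : Bf L e ψ₁ ψ₁ = 0 := by
    rw [hψ₁, Bf_left_comb, Bf_right_comb, Bf_right_comb, h00,
      Bf_symm L e φ ψ₀]
    rw [ht]
    field_simp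
    ring
  have main := splitting_of_null_pair L hH hQ halt e ψ₀ ψ₁ h00 h11 h01
  refine ⟨_, _, main, ?_⟩
  intro Hp' Hm' hs'
  have hB := ker_eq_of_splitting L hH hQ halt e ψ₀ ψ₁ h00 h11 h01 Hp' Hm' hs'
  have hA := ker_eq_of_splitting L hH hQ halt e ψ₀ ψ₁ h00 h11 h01 Hm' Hp'
    (IsHyperbolicSplitting.symm2 L halt hs')
  have hne : Hp' ≠ Hm' := by
    intro hEq
    obtain ⟨h1, h2, hc, -⟩ := hs'
    rw [hEq] at hc
    have hbot : Hm' = ⊥ := disjoint_self.mp hc.disjoint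
    rw [hbot, finrank_bot] at h2
    omega
  rcases hB with hB1 | hB0 <;> rcases hA with hA1 | hA0
  · exact absurd (hA1.trans hB1.symm) hne
  · exact Or.inr ⟨hA0, hB1⟩
  · exact Or.inl ⟨hA1, hB0⟩
  · exact absurd (hA0.trans hB0.symm) hne
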